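/- arXiv:1803.00093 — 5 statements merged into one kernel-verified Lean document; each statement's English description precedes it below -/
import Mathlib

section
/- Let s, β ∈ ℝ² with A := |s × β| > 0 and s_t := s + t·β. Suppose |β| > 1, |s| ≤ |β|, and t, t' ∈ [N, K] with N ≥ 1 and |t − t'| ≥ 1. Then sin θ(s_t, s_{t'}) ≥ A / ((K+1)²·|β|²). -/
open InnerProductGeometry RealInnerProductSpace

set_option maxHeartbeats 1000000 in
/-- Separation estimate for protochild directions (Angle Fact (3)). -/
theorem stmt_2 (s β : EuclideanSpace ℝ (Fin 2))
    (A : ℝ) (hA : A = |s 0 * β 1 - s 1 * β 0|) (hApos : A > 0)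
    (hβ : ‖β‖ > 1) (hs : ‖s‖ ≤ ‖β‖)
    (N K t t' : ℝ) (hN : 1 ≤ N)
    (ht : t ∈ Set.Icc N K) (ht' : t' ∈ Set.Icc N K) (hsep : 1 ≤ |t - t'|) :
    Real.sin (angle (s + t • β) (s + t' • β)) ≥ A / ((K + 1) ^ 2 * ‖β‖ ^ 2) := by
  obtain ⟨htN, htK⟩ := ht
  obtain ⟨ht'N, ht'K⟩ := ht'
  have ht1 : (1:ℝ) ≤ t := le_trans hN htN
  have ht'1 : (1:ℝ) ≤ t' := le_trans hN ht'N
  have hK1 : (1:ℝ) ≤ K := le_trans ht1 htK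
  have hβ0 : (0:ℝ) < ‖β‖ := by linarith
  set u := s + t • β with hu
  set v := s + t' • β with hv
  have hu0 : u 0 = s 0 + t * β 0 := by simp [hu]
  have hu1 : u 1 = s 1 + t * β 1 := by simp [hu]
  have hv0 : v 0 = s 0 + t' * β 0 := by simp [hv]
  have hv1 : v 1 = s 1 + t' * β 1 := by simp [hv]
  set C : ℝ := (t' - t) * (s 0 * β 1 - s 1 * β 0) with hC
  have hcross : u 0 * v 1 - u 1 * v 0 = C := by
    rw [hu0, hu1, hv0, hv1, hC]; ring
  have hinn : ⟪u, v⟫ = u 0 * v 0 + u 1 * v 1 := by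
    simp [PiLp.inner_apply, Fin.sum_univ_two]; ring
  have hnu2 : ‖u‖ ^ 2 = u 0 ^ 2 + u 1 ^ 2 := by
    rw [EuclideanSpace.norm_eq, Real.sq_sqrt (by positivity)]
    simp [Fin.sum_univ_two]
  have hnv2 : ‖v‖ ^ 2 = v 0 ^ 2 + v 1 ^ 2 := by
    rw [EuclideanSpace.norm_eq, Real.sq_sqrt (by positivity)]
    simp [Fin.sum_univ_two]
  have lagrange : ‖u‖ ^ 2 * ‖v‖ ^ 2 - ⟪u, v⟫ ^ 2 = C ^ 2 := by
    rw [hnu2, hnv2, hinn, ← hcross]; ring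
  -- C ≠ 0
  have hCA : A ≤ |C| := by
    rw [hC, abs_mul, hA]
    have h1 : (1:ℝ) ≤ |t' - t| := by rwa [abs_sub_comm]
    nlinarith [abs_nonneg (s 0 * β 1 - s 1 * β 0)]
  have hC0 : 0 < |C| := lt_of_lt_of_le hApos hCA
  have hCne : C ≠ 0 := fun h => by rw [h, abs_zero] at hC0; exact lt_irrefl 0 hC0
  have hC2 : 0 < C ^ 2 := by positivity
  have hp : 0 < ‖u‖ ^ 2 * ‖v‖ ^ 2 := by
    have h1 : (0:ℝ) ≤ ⟪u, v⟫ ^ 2 := sq_nonneg _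
    linarith [lagrange]
  have hnu : 0 < ‖u‖ := by
    rcases (norm_nonneg u).lt_or_eq with h | h
    · exact h
    · exfalso; rw [← h] at hp; simp at hp
  have hnv : 0 < ‖v‖ := by
    rcases (norm_nonneg v).lt_or_eq with h | h
    · exact h
    · exfalso; rw [← h] at hp; simp at hp
  have hprod : 0 < ‖u‖ * ‖v‖ := mul_pos hnu hnv
  have hsin : Real.sin (angle u v) = |C| / (‖u‖ * ‖v‖) := by
    rw [InnerProductGeometry.angle, Real.sin_arccos]
    have hpne : ((‖u‖ * ‖v‖) : ℝ) ≠ 0 := ne_of_gt hprod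
    have h1 : 1 - (⟪u, v⟫ / (‖u‖ * ‖v‖)) ^ 2 = (C / (‖u‖ * ‖v‖)) ^ 2 := by
      rw [div_pow, div_pow, eq_div_iff (pow_ne_zero 2 hpne), sub_mul, one_mul,
        div_mul_cancel₀ _ (pow_ne_zero 2 hpne), mul_pow]
      linarith [lagrange]
    rw [h1, Real.sqrt_sq_eq_abs, abs_div, abs_of_pos hprod]
  rw [hsin]
  -- norm bounds
  have hub : ‖u‖ ≤ (K + 1) * ‖β‖ := by
    calc ‖u‖ ≤ ‖s‖ + ‖t • β‖ := norm_add_le _ _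
    _ = ‖s‖ + |t| * ‖β‖ := by rw [norm_smul, Real.norm_eq_abs]
    _ ≤ ‖β‖ + K * ‖β‖ := by
        have : |t| = t := abs_of_pos (by linarith)
        rw [this]; nlinarith
    _ = (K + 1) * ‖β‖ := by ring
  have hvb : ‖v‖ ≤ (K + 1) * ‖β‖ := by
    calc ‖v‖ ≤ ‖s‖ + ‖t' • β‖ := norm_add_le _ _
    _ = ‖s‖ + |t'| * ‖β‖ := by rw [norm_smul, Real.norm_eq_abs]
    _ ≤ ‖β‖ + K * ‖β‖ := by
        have : |t'| = t' := abs_of_pos (by linarith)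
        rw [this]; nlinarith
    _ = (K + 1) * ‖β‖ := by ring
  have hprodb : ‖u‖ * ‖v‖ ≤ (K + 1) ^ 2 * ‖β‖ ^ 2 := by
    have := mul_le_mul hub hvb (norm_nonneg v) (by positivity)
    nlinarith
  exact div_le_div₀ (abs_nonneg C) hCA hprod hprodb
end

section
/- Let θ ∈ ℝ with cos θ > 1/2, let a, b > 0, δ > 0, and let g be the matrix [[ (b/a) cos θ, −ab sin θ ],[ sin θ/(ab), (a/b) cos θ ]]. If (h,v) ∈ ℝ² satisfies |g·(h,v)| ≤ δ, then |h| ≤ 2δ·(a/b) + 2|v|·a²·|sin θ|. -/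
open Matrix

/-- Step 2 of Lemma 6.2: bound on the horizontal component of a vector
that becomes short after applying the transition matrix. -/
theorem stmt_6 (θ a b δ : ℝ) (hθ : Real.cos θ > 1 / 2) (ha : 0 < a) (hb : 0 < b)
    (hδ : 0 < δ) (h v : ℝ)
    (g : Matrix (Fin 2) (Fin 2) ℝ)
    (hg : g = !![(b / a) * Real.cos θ, -(a * b) * Real.sin θ;
                 Real.sin θ / (a * b), (a / b) * Real.cos θ])
    (hshort : Real.sqrt ((g.mulVec ![h, v] 0) ^ 2 + (g.mulVec ![h, v] 1) ^ 2) ≤ δ) :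
    |h| ≤ 2 * δ * (a / b) + 2 * |v| * a ^ 2 * |Real.sin θ| := by
  subst hg
  set x := (b / a) * Real.cos θ * h + -(a * b) * Real.sin θ * v with hx
  have h0 : (!![(b / a) * Real.cos θ, -(a * b) * Real.sin θ;
       Real.sin θ / (a * b), (a / b) * Real.cos θ]).mulVec ![h, v] 0 = x := by
    simp [Matrix.mulVec, dotProduct, Fin.sum_univ_two, hx]
  have hx1 : |x| ≤ δ := by
    have h1 : x ^ 2 ≤ δ ^ 2 := by
      have hs : Real.sqrt (x ^ 2) ≤ δ := by
        refine le_trans ?_ hshort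
        rw [h0]
        exact Real.sqrt_le_sqrt (by nlinarith [sq_nonneg ((!![(b / a) * Real.cos θ, -(a * b) * Real.sin θ;
          Real.sin θ / (a * b), (a / b) * Real.cos θ]).mulVec ![h, v] 1)])
      nlinarith [Real.sq_sqrt (sq_nonneg x), Real.sqrt_nonneg (x ^ 2)]
    nlinarith [abs_nonneg x, sq_abs x]
  -- |(b/a) cos θ h| ≤ δ + ab |sin θ| |v|
  have key : (b / a) * Real.cos θ * |h| ≤ δ + a * b * |Real.sin θ| * |v| := by
    have := abs_sub_abs_le_abs_sub ((b / a) * Real.cos θ * h) (-(-(a * b) * Real.sin θ * v))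
    have e1 : |(b / a) * Real.cos θ * h| = (b / a) * Real.cos θ * |h| := by
      rw [abs_mul, abs_of_pos (by positivity : (0:ℝ) < (b / a) * Real.cos θ)]
    have e2 : |(-(-(a * b) * Real.sin θ * v))| = a * b * |Real.sin θ| * |v| := by
      rw [abs_neg, abs_mul, abs_mul, abs_neg, abs_of_pos (by positivity : (0:ℝ) < a * b)]
    have e3 : (b / a) * Real.cos θ * h - -(-(a * b) * Real.sin θ * v) = x := by ring
    rw [e1, e2, e3] at this
    linarith
  have hba : 0 < b / a := by positivity
  have hcos : (1:ℝ)/2 < Real.cos θ := hθ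
  have habs : |h| ≤ (δ + a * b * |Real.sin θ| * |v|) / ((b / a) * Real.cos θ) := by
    rw [le_div_iff₀ (by positivity)]
    nlinarith
  refine habs.trans ?_
  rw [div_le_iff₀ (by positivity)]
  have h1 : 0 ≤ |Real.sin θ| * |v| := by positivity
  have h2 : a / b * (b / a) = 1 := by field_simp
  have e : (2 * δ * (a / b) + 2 * |v| * a ^ 2 * |Real.sin θ|) * ((b / a) * Real.cos θ)
      = 2 * Real.cos θ * δ + 2 * Real.cos θ * (a * b * (|Real.sin θ| * |v|)) := by
    field_simp
  rw [e]
  nlinarith [mul_nonneg (mul_pos ha hb).le h1]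
end

section
/- Let t > 0 and 0 ≤ ν < 1, and let B ⊆ [t, 2t] be a measurable set with Lebesgue measure at most ν·t. Then there exist at least ⌈(1−ν)t − 1⌉ points in [t, 2t] \ B that are pairwise at distance at least 1 from each other. (More precisely, there exists a finite set P ⊆ [t,2t]\B with |P| ≥ (1−ν)t − 1 and |p − q| ≥ 1 for all distinct p, q ∈ P.) -/
open MeasureTheory

/-- Greedy selection: from a measurable set `S ⊆ [a,b]` of measure more than `n`
one can select `n` points of `S` that are pairwise `1`-separated. -/
lemma greedy_select (a b : ℝ) : ∀ n : ℕ, ∀ S : Set ℝ, MeasurableSet S →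
    S ⊆ Set.Icc a b → (n : ℝ) < (volume S).toReal →
    ∃ P : Finset ℝ, ↑P ⊆ S ∧ P.card = n ∧
      ∀ p ∈ P, ∀ q ∈ P, p ≠ q → 1 ≤ |p - q| := by
  intro n
  induction n with
  | zero =>
    intro S _ _ _
    exact ⟨∅, by simp, rfl, by simp⟩
  | succ n ih =>
    intro S hSm hSsub hvol
    have hfin : volume S ≠ ⊤ :=
      ((measure_mono hSsub).trans_lt measure_Icc_lt_top).ne
    have hS0 : 0 < (volume S).toReal := by
      have : (0:ℝ) ≤ ((n:ℕ):ℝ) := Nat.cast_nonneg _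
      push_cast at hvol
      linarith
    have hSne : volume S ≠ 0 := by
      intro h; rw [h] at hS0; simp at hS0
    -- the set of levels where mass has appeared
    set A : Set ℝ := {y : ℝ | 0 < volume (S ∩ Set.Iic y)} with hA
    have hSb : S ∩ Set.Iic b = S := by
      apply Set.inter_eq_left.mpr
      intro x hx; exact (hSsub hx).2
    have hbA : b ∈ A := by
      simp only [hA, Set.mem_setOf_eq, hSb]
      exact pos_iff_ne_zero.mpr hSne
    have hAne : A.Nonempty := ⟨b, hbA⟩
    have hAbdd : BddBelow A := by
      refine ⟨a, fun y hy => ?_⟩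
      by_contra hya
      push_neg at hya
      have hempty : S ∩ Set.Iic y = ∅ := by
        apply Set.eq_empty_iff_forall_notMem.mpr
        rintro x ⟨hxS, hxy⟩
        have := (hSsub hxS).1
        simp only [Set.mem_Iic] at hxy
        linarith
      simp only [hA, Set.mem_setOf_eq, hempty] at hy
      simp at hy
    set c := sInf A with hc
    -- the mass below c is zero
    have hIio : volume (S ∩ Set.Iio c) = 0 := by
      have hsub : S ∩ Set.Iio c ⊆ ⋃ k : ℕ, S ∩ Set.Iic (c - ((k:ℝ)+1)⁻¹) := by
        rintro x ⟨hxS, hxc⟩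
        simp only [Set.mem_Iio] at hxc
        obtain ⟨k, hk⟩ := exists_nat_one_div_lt (sub_pos.mpr hxc)
        refine Set.mem_iUnion.mpr ⟨k, hxS, ?_⟩
        simp only [Set.mem_Iic]
        rw [one_div] at hk
        linarith
      refine measure_mono_null hsub (measure_iUnion_null fun k => ?_)
      have hlt : c - ((k:ℝ)+1)⁻¹ < c := by
        have : (0:ℝ) < ((k:ℝ)+1)⁻¹ := by positivity
        linarith
      have : c - ((k:ℝ)+1)⁻¹ ∉ A := fun h => absurd (csInf_le hAbdd h) (not_le.mpr hlt)
      simp only [hA, Set.mem_setOf_eq, not_lt, le_zero_iff] at this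
      exact this
    have hIic : volume (S ∩ Set.Iic c) = 0 := by
      have hsub : S ∩ Set.Iic c ⊆ (S ∩ Set.Iio c) ∪ {c} := by
        rintro x ⟨hxS, hxc⟩
        rcases lt_or_eq_of_le (Set.mem_Iic.mp hxc) with h | h
        · exact Or.inl ⟨hxS, h⟩
        · exact Or.inr (by simp [h])
      refine measure_mono_null hsub ?_
      refine le_antisymm ?_ zero_le
      calc volume ((S ∩ Set.Iio c) ∪ {c}) ≤ volume (S ∩ Set.Iio c) + volume ({c} : Set ℝ) :=
            measure_union_le _ _
        _ = 0 := by rw [hIio, Real.volume_singleton, add_zero]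
    -- choose ε
    set ε : ℝ := ((volume S).toReal - ((n:ℝ)+1)) / 2 with hε
    have hεpos : 0 < ε := by
      push_cast at hvol
      simp only [hε]
      linarith
    -- positive mass in (c, c+ε]
    have hpos : 0 < volume (S ∩ Set.Ioc c (c + ε)) := by
      obtain ⟨y, hyA, hyc⟩ := exists_lt_of_csInf_lt hAne (by linarith : c < c + ε)
      simp only [hA, Set.mem_setOf_eq] at hyA
      have hmono : volume (S ∩ Set.Iic y) ≤ volume (S ∩ Set.Iic (c + ε)) :=
        measure_mono (Set.inter_subset_inter_right _ (Set.Iic_subset_Iic.mpr hyc.le))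
      have hcover : S ∩ Set.Iic (c + ε) ⊆ (S ∩ Set.Iic c) ∪ (S ∩ Set.Ioc c (c + ε)) := by
        rintro x ⟨hxS, hx⟩
        simp only [Set.mem_Iic] at hx
        rcases le_or_gt x c with h | h
        · exact Or.inl ⟨hxS, h⟩
        · exact Or.inr ⟨hxS, h, hx⟩
      by_contra h
      push_neg at h
      have h0 : volume (S ∩ Set.Ioc c (c + ε)) = 0 := le_antisymm h zero_le
      have : volume (S ∩ Set.Iic (c + ε)) = 0 := by
        refine measure_mono_null hcover ?_
        refine le_antisymm ?_ zero_le
        calc volume ((S ∩ Set.Iic c) ∪ (S ∩ Set.Ioc c (c + ε)))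
            ≤ volume (S ∩ Set.Iic c) + volume (S ∩ Set.Ioc c (c + ε)) := measure_union_le _ _
          _ = 0 := by rw [hIic, h0, add_zero]
      rw [this] at hmono
      exact absurd (le_zero_iff.mp hmono) hyA.ne'
    obtain ⟨q, hqS, hqc, hqce⟩ := nonempty_of_measure_ne_zero hpos.ne'
    -- split S into a chunk below q+1 and the rest
    set S' : Set ℝ := S ∩ Set.Ioi (q + 1) with hS'
    have hS'm : MeasurableSet S' := hSm.inter measurableSet_Ioi
    have hS'sub : S' ⊆ Set.Icc a b := fun x hx => hSsub hx.1
    have hsum : volume (S ∩ Set.Iic (q+1)) + volume S' = volume S := by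
      have := measure_inter_add_diff (μ := volume) S (measurableSet_Iic (a := q+1))
      rw [Set.diff_eq, Set.compl_Iic] at this
      exact this
    -- bound the chunk
    have hchunk : volume (S ∩ Set.Iic (q+1)) ≤ ENNReal.ofReal (1 + ε) := by
      have hcover : S ∩ Set.Iic (q+1) ⊆ (S ∩ Set.Iic c) ∪ Set.Ioc c (q+1) := by
        rintro x ⟨hxS, hx⟩
        simp only [Set.mem_Iic] at hx
        rcases le_or_gt x c with h | h
        · exact Or.inl ⟨hxS, h⟩
        · exact Or.inr ⟨h, hx⟩
      calc volume (S ∩ Set.Iic (q+1)) ≤ volume ((S ∩ Set.Iic c) ∪ Set.Ioc c (q+1)) :=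
            measure_mono hcover
        _ ≤ volume (S ∩ Set.Iic c) + volume (Set.Ioc c (q+1)) := measure_union_le _ _
        _ = ENNReal.ofReal (q + 1 - c) := by rw [hIic, Real.volume_Ioc, zero_add]
        _ ≤ ENNReal.ofReal (1 + ε) := ENNReal.ofReal_le_ofReal (by linarith [hqce])
    have hchunkfin : volume (S ∩ Set.Iic (q+1)) ≠ ⊤ :=
      ne_of_lt (lt_of_le_of_lt (measure_mono Set.inter_subset_left) (lt_of_le_of_ne le_top hfin))
    have hS'fin : volume S' ≠ ⊤ :=
      ne_of_lt (lt_of_le_of_lt (measure_mono Set.inter_subset_left) (lt_of_le_of_ne le_top hfin))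
    have htoReal : (volume (S ∩ Set.Iic (q+1))).toReal + (volume S').toReal
        = (volume S).toReal := by
      rw [← ENNReal.toReal_add hchunkfin hS'fin, hsum]
    have hchunkR : (volume (S ∩ Set.Iic (q+1))).toReal ≤ 1 + ε :=
      ENNReal.toReal_le_of_le_ofReal (by linarith) hchunk
    have hvol' : (n : ℝ) < (volume S').toReal := by
      push_cast at hvol
      simp only [hε] at hεpos ⊢
      linarith
    obtain ⟨P', hP'sub, hP'card, hP'sep⟩ := ih S' hS'm hS'sub hvol'
    have hqnot : q ∉ P' := by
      intro h
      have := (hP'sub h).2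
      simp only [Set.mem_Ioi] at this
      linarith
    refine ⟨insert q P', ?_, ?_, ?_⟩
    · intro x hx
      simp only [Finset.coe_insert, Set.mem_insert_iff] at hx
      rcases hx with rfl | hx
      · exact hqS
      · exact (hP'sub hx).1
    · rw [Finset.card_insert_of_notMem hqnot, hP'card]
    · intro p hp r hr hpr
      simp only [Finset.mem_insert] at hp hr
      rcases hp with rfl | hp <;> rcases hr with rfl | hr
      · exact absurd rfl hpr
      · have := (hP'sub hr).2
        simp only [Set.mem_Ioi] at this
        rw [abs_sub_comm, abs_of_pos (by linarith)]
        linarith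
      · have := (hP'sub hp).2
        simp only [Set.mem_Ioi] at this
        rw [abs_of_pos (by linarith)]
        linarith
      · exact hP'sep p hp r hr hpr

/-- Corollary `C:lots`: from an interval `[t,2t]` whose bad subset has measure
at most `ν·t` one may select at least `(1−ν)t − 1` unit-separated good points. -/
theorem stmt_7 (t ν : ℝ) (ht : 0 < t) (hν0 : 0 ≤ ν) (hν1 : ν < 1)
    (B : Set ℝ) (hBsub : B ⊆ Set.Icc t (2 * t)) (hBmeas : MeasurableSet B)
    (hBvol : volume B ≤ ENNReal.ofReal (ν * t)) :
    ∃ P : Finset ℝ, ↑P ⊆ Set.Icc t (2 * t) \ B ∧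
      (P.card : ℝ) ≥ (1 - ν) * t - 1 ∧
      ∀ p ∈ P, ∀ q ∈ P, p ≠ q → 1 ≤ |p - q| := by
  set S : Set ℝ := Set.Icc t (2 * t) \ B with hS
  have hSm : MeasurableSet S := measurableSet_Icc.diff hBmeas
  have hSsub : S ⊆ Set.Icc t (2 * t) := Set.diff_subset
  -- volume computations
  have hIcc : volume (Set.Icc t (2 * t)) = ENNReal.ofReal t := by
    rw [Real.volume_Icc]; congr 1; ring
  have hsplit : volume B + volume S = volume (Set.Icc t (2 * t)) := by
    have := measure_inter_add_diff (μ := volume) (Set.Icc t (2 * t)) hBmeas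
    rwa [Set.inter_eq_right.mpr hBsub] at this
  have hBfin : volume B ≠ ⊤ :=
    ne_of_lt (lt_of_le_of_lt hBvol (by exact ENNReal.ofReal_lt_top))
  have hSfin : volume S ≠ ⊤ :=
    ((measure_mono hSsub).trans_lt measure_Icc_lt_top).ne
  have hBR : (volume B).toReal ≤ ν * t :=
    ENNReal.toReal_le_of_le_ofReal (by positivity) hBvol
  have hSR : (1 - ν) * t ≤ (volume S).toReal := by
    have h1 : (volume B).toReal + (volume S).toReal = t := by
      rw [← ENNReal.toReal_add hBfin hSfin, hsplit, hIcc, ENNReal.toReal_ofReal ht.le]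
    linarith
  set m : ℝ := (1 - ν) * t with hm
  have hm0 : 0 < m := by
    have : 0 < 1 - ν := by linarith
    positivity
  have hceil1 : 1 ≤ ⌈m⌉₊ := Nat.ceil_pos.mpr hm0
  set n : ℕ := ⌈m⌉₊ - 1 with hn
  have hncast : (n : ℝ) = (⌈m⌉₊ : ℝ) - 1 := by
    rw [hn, Nat.cast_sub hceil1, Nat.cast_one]
  have hnm : (n : ℝ) < m := by
    have := Nat.ceil_lt_add_one hm0.le
    rw [hncast]; linarith
  obtain ⟨P, hPsub, hPcard, hPsep⟩ :=
    greedy_select t (2 * t) n S hSm hSsub (lt_of_lt_of_le hnm hSR)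
  refine ⟨P, hPsub, ?_, hPsep⟩
  rw [hPcard, hncast]
  have := Nat.le_ceil m
  linarith
end

section
/- Let δ, c, b, b₁ > 0 with b > 21, δ < 1/3, and b₁ ≥ b·log b. Then 1/(b₁²·log b₁) + δ/(b²·log b) + (δ/2)²/(b²·(log b)²) ≤ 1/(b²·log b). -/
/-- The computation in Angle Fact 2, part (1): `I_{β₁} ⊆ I_{β₀}`. -/
theorem stmt_13 (δ c b b₁ : ℝ) (hδ0 : 0 < δ) (hc : 0 < c) (hb0 : 0 < b)
    (hb₁0 : 0 < b₁) (hb : b > 21) (hδ : δ < 1 / 3) (hb₁ : b₁ ≥ b * Real.log b) :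
    1 / (b₁ ^ 2 * Real.log b₁) + δ / (b ^ 2 * Real.log b) +
      (δ / 2) ^ 2 / (b ^ 2 * (Real.log b) ^ 2) ≤ 1 / (b ^ 2 * Real.log b) := by
  have hexp3 : Real.exp 3 < 21 := by
    have h1 : Real.exp 1 < 2.7182818286 := Real.exp_one_lt_d9
    have h3 : Real.exp 3 = Real.exp 1 * Real.exp 1 * Real.exp 1 := by
      rw [← Real.exp_add, ← Real.exp_add]; norm_num
    nlinarith [Real.exp_pos 1]
  have hL : (3 : ℝ) < Real.log b := by
    have h0 := (Real.lt_log_iff_exp_lt (by norm_num : (0:ℝ) < 21)).mpr hexp3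
    have h2 : Real.log 21 ≤ Real.log b := Real.log_le_log (by norm_num) (le_of_lt hb)
    linarith
  set L := Real.log b with hLdef
  have hL0 : (0 : ℝ) < L := by linarith
  have hbb : b ≤ b₁ := le_trans (by nlinarith) hb₁
  have hL1 : L ≤ Real.log b₁ := Real.log_le_log hb0 hbb
  have hL1pos : 0 < Real.log b₁ := lt_of_lt_of_le hL0 hL1
  have hA : (0 : ℝ) < b ^ 2 * L := by positivity
  have hden1 : 9 * (b ^ 2 * L) ≤ b₁ ^ 2 * Real.log b₁ := by
    have hb1sq : b ^ 2 * L ^ 2 ≤ b₁ ^ 2 := by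
      have hm := mul_self_le_mul_self (by positivity : (0:ℝ) ≤ b * L) hb₁
      nlinarith
    nlinarith
  have h1 : 1 / (b₁ ^ 2 * Real.log b₁) ≤ 1 / (9 * (b ^ 2 * L)) :=
    one_div_le_one_div_of_le (by positivity) hden1
  have h2 : δ / (b ^ 2 * L) ≤ (1/3) / (b ^ 2 * L) := by gcongr
  have h3 : (δ/2) ^ 2 / (b ^ 2 * L ^ 2) ≤ (1/36) / (3 * (b ^ 2 * L)) :=
    div_le_div₀ (by norm_num) (by nlinarith) (by positivity) (by nlinarith)
  have hsum : 1 / (9 * (b ^ 2 * L)) + (1/3) / (b ^ 2 * L) + (1/36) / (3 * (b ^ 2 * L))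
      = (49/108) * (1 / (b ^ 2 * L)) := by
    field_simp
    ring
  have hpos : 0 ≤ 1 / (b ^ 2 * L) := by positivity
  linarith
end

section
/- Let β ∈ ℝ² be nonzero, let M > 1, 0 < ε < 1, and suppose log|β| > 4/ε². Suppose the angle between β and the vertical direction is at most 1/(|β|²·log|β|). Then for every t with log|β| + log(2/ε) ≤ t ≤ log(M·|β|·log|β|) − log(2M/ε), the vector g_t·β has Euclidean norm at most ε·√2 (indeed both components have absolute value at most ε/2, hence ‖g_t β‖ ≤ ε). -/
open InnerProductGeometry

/-- Lemma `L2`: a cylinder nearly parallel to the flow direction stays short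
under the geodesic flow `g_t = diag(e^t, e^{−t})` for the stated range of times. -/
theorem stmt_17 (β : EuclideanSpace ℝ (Fin 2)) (hβ : β ≠ 0)
    (M ε : ℝ) (hM : 1 < M) (hε0 : 0 < ε) (hε1 : ε < 1)
    (hlog : Real.log ‖β‖ > 4 / ε ^ 2)
    (hangle : angle β (EuclideanSpace.single 1 1) ≤ 1 / (‖β‖ ^ 2 * Real.log ‖β‖))
    (t : ℝ)
    (ht1 : Real.log ‖β‖ + Real.log (2 / ε) ≤ t)
    (ht2 : t ≤ Real.log (M * ‖β‖ * Real.log ‖β‖) - Real.log (2 * M / ε)) :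
    |Real.exp t * β 0| ≤ ε / 2 ∧ |Real.exp (-t) * β 1| ≤ ε / 2 ∧
      ‖(WithLp.equiv 2 (Fin 2 → ℝ)).symm
        ![Real.exp t * β 0, Real.exp (-t) * β 1]‖ ≤ ε := by
  set b := ‖β‖ with hbdef
  set L := Real.log b with hLdef
  have hb0 : (0:ℝ) < b := norm_pos_iff.mpr hβ
  have hL0 : (0:ℝ) < L := lt_trans (by positivity) hlog
  have hb1 : (1:ℝ) < b := (Real.log_pos_iff hb0.le).mp hL0
  -- inner products
  have hinner_self : (inner ℝ β β : ℝ) = β 0 ^ 2 + β 1 ^ 2 := by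
    rw [PiLp.inner_apply]; simp [Fin.sum_univ_two, sq]
  have hinner_single : (inner ℝ β (EuclideanSpace.single 1 (1:ℝ)) : ℝ) = β 1 := by
    simp [EuclideanSpace.inner_single_right]
  have hnorm_single : ‖(EuclideanSpace.single 1 (1:ℝ) : EuclideanSpace ℝ (Fin 2))‖ = 1 := by
    simp
  -- |β 0| = sin(angle) * b
  have hsin := sin_angle_mul_norm_mul_norm β (EuclideanSpace.single 1 (1:ℝ))
  rw [hinner_self, hinner_single, hnorm_single, real_inner_self_eq_norm_mul_norm,
    hnorm_single] at hsin
  have hsin' : Real.sin (angle β (EuclideanSpace.single 1 (1:ℝ))) * b = |β 0| := by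
    rw [mul_one] at hsin
    rw [hbdef, hsin, show (β 0 ^ 2 + β 1 ^ 2) * (1 * 1) - β 1 * β 1 = β 0 ^ 2 by ring,
      Real.sqrt_sq_eq_abs]
  -- bound on |β 0|
  have hβ0 : |β 0| ≤ 1 / (b * L) := by
    rw [← hsin']
    have h1 : Real.sin (angle β (EuclideanSpace.single 1 (1:ℝ)))
        ≤ 1 / (b ^ 2 * L) :=
      le_trans (Real.sin_le (angle_nonneg _ _)) hangle
    calc Real.sin (angle β (EuclideanSpace.single 1 (1:ℝ))) * b
        ≤ 1 / (b ^ 2 * L) * b := by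
          apply mul_le_mul_of_nonneg_right h1 hb0.le
      _ = 1 / (b * L) := by field_simp
  -- bound on |β 1|
  have hβ1 : |β 1| ≤ b := by
    have : β 1 ^ 2 ≤ b ^ 2 := by
      have := hinner_self
      rw [show (inner ℝ β β : ℝ) = b * b from real_inner_self_eq_norm_mul_norm β] at this
      nlinarith [sq_nonneg (β 0)]
    calc |β 1| = Real.sqrt (β 1 ^ 2) := (Real.sqrt_sq_eq_abs _).symm
      _ ≤ Real.sqrt (b ^ 2) := Real.sqrt_le_sqrt this
      _ = b := by rw [Real.sqrt_sq hb0.le]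
  -- bound on exp t
  have hexpt : Real.exp t ≤ ε * b * L / 2 := by
    have h2 : Real.exp t ≤ Real.exp (Real.log (M * b * L) - Real.log (2 * M / ε)) :=
      Real.exp_le_exp.mpr ht2
    rwa [Real.exp_sub, Real.exp_log (by positivity), Real.exp_log (by positivity),
      show M * b * L / (2 * M / ε) = ε * b * L / 2 by field_simp] at h2
  -- bound on exp (-t)
  have hexpnt : Real.exp (-t) ≤ ε / (2 * b) := by
    have h2 : Real.exp (-t) ≤ Real.exp (-(L + Real.log (2 / ε))) :=
      Real.exp_le_exp.mpr (by linarith)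
    have h3 : Real.exp (-(L + Real.log (2 / ε))) = ε / (2 * b) := by
      rw [hLdef, ← Real.log_mul hb0.ne' (by positivity), Real.exp_neg,
        Real.exp_log (by positivity)]
      field_simp
    exact h3 ▸ h2
  have key0 : |Real.exp t * β 0| ≤ ε / 2 := by
    rw [abs_mul, abs_of_pos (Real.exp_pos t)]
    calc Real.exp t * |β 0| ≤ (ε * b * L / 2) * (1 / (b * L)) := by
          apply mul_le_mul hexpt hβ0 (abs_nonneg _) (by positivity)
      _ = ε / 2 := by field_simp
  have key1 : |Real.exp (-t) * β 1| ≤ ε / 2 := by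
    rw [abs_mul, abs_of_pos (Real.exp_pos _)]
    calc Real.exp (-t) * |β 1| ≤ (ε / (2 * b)) * b := by
          apply mul_le_mul hexpnt hβ1 (abs_nonneg _) (by positivity)
      _ = ε / 2 := by field_simp
  refine ⟨key0, key1, ?_⟩
  rw [EuclideanSpace.norm_eq]
  have : ∑ i, ‖((WithLp.equiv 2 (Fin 2 → ℝ)).symm
      ![Real.exp t * β 0, Real.exp (-t) * β 1]) i‖ ^ 2
      = (Real.exp t * β 0) ^ 2 + (Real.exp (-t) * β 1) ^ 2 := by
    simp [Fin.sum_univ_two, sq_abs]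
  rw [this]
  have h1 : (Real.exp t * β 0) ^ 2 ≤ (ε/2) ^ 2 := by
    rw [← sq_abs]; exact pow_le_pow_left₀ (abs_nonneg _) key0 2
  have h2 : (Real.exp (-t) * β 1) ^ 2 ≤ (ε/2) ^ 2 := by
    rw [← sq_abs]; exact pow_le_pow_left₀ (abs_nonneg _) key1 2
  calc Real.sqrt ((Real.exp t * β 0) ^ 2 + (Real.exp (-t) * β 1) ^ 2)
      ≤ Real.sqrt (ε ^ 2) := Real.sqrt_le_sqrt (by nlinarith)
    _ = ε := Real.sqrt_sq hε0.le
end
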